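/- Let Q be a probability measure on a measurable space Y, let A ⊆ Y be a measurable set with Q(A) > 0, and let φ : ℝ → ℝ be convex with φ(1) = 0. Then for every probability measure P on Y with P ≪ Q and P(Aᶜ) = 0 (and such that φ ∘ (dP/dQ) is Q-integrable), one has D_φ(P‖Q) ≥ Q(A)·φ(1/Q(A)) + Q(Aᶜ)·φ(0). Moreover, equality holds for the conditional measure Q(·|A), i.e. D_φ(Q(·|A)‖Q) = Q(A)·φ(1/Q(A)) + Q(Aᶜ)·φ(0). -/

import Mathlib

open MeasureTheory ProbabilityTheory Real

/-- For a probability measure `Q`, a measurable set `A` with `Q A > 0`,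
and a convex `φ : ℝ → ℝ` with `φ 1 = 0`, every probability measure `P ≪ Q` with `P Aᶜ = 0`
(and `φ ∘ dP/dQ` integrable w.r.t. `Q`) satisfies
`D_φ(P‖Q) ≥ Q(A)·φ(1/Q(A)) + Q(Aᶜ)·φ(0)`, and equality holds for the conditional
measure `Q(·|A)`. -/
theorem stmt_0 {Y : Type*} [MeasurableSpace Y]
    (Q : Measure Y) [IsProbabilityMeasure Q]
    (A : Set Y) (hA : MeasurableSet A) (hQA : 0 < Q A)
    (φ : ℝ → ℝ) (hφconv : ConvexOn ℝ Set.univ φ) (hφ1 : φ 1 = 0) :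
    (∀ P : Measure Y, IsProbabilityMeasure P → P ≪ Q → P Aᶜ = 0 →
      Integrable (fun y => φ ((P.rnDeriv Q y).toReal)) Q →
      (Q A).toReal * φ (1 / (Q A).toReal) + (Q Aᶜ).toReal * φ 0 ≤
        ∫ y, φ ((P.rnDeriv Q y).toReal) ∂Q) ∧
    ∫ y, φ (((Q[|A]).rnDeriv Q y).toReal) ∂Q =
      (Q A).toReal * φ (1 / (Q A).toReal) + (Q Aᶜ).toReal * φ 0 := by
  have hQA0 : Q A ≠ 0 := hQA.ne'
  have hQAtop : Q A ≠ ⊤ := measure_ne_top Q A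
  have hQAr : 0 < (Q A).toReal := ENNReal.toReal_pos hQA0 hQAtop
  have hφc : ContinuousOn φ Set.univ := hφconv.continuousOn isOpen_univ
  constructor
  · intro P hP hPQ hPAc hInt
    set f := fun y => (P.rnDeriv Q y).toReal with hf
    have hf_int : Integrable f Q := Measure.integrable_toReal_rnDeriv
    have hPA : P A = 1 := by
      have h := measure_add_measure_compl (μ := P) hA
      rw [hPAc, measure_univ, add_zero] at h
      exact h
    -- on Aᶜ, the density vanishes a.e.
    have h0 : P.rnDeriv Q =ᵐ[Q.restrict Aᶜ] 0 := by
      rw [← lintegral_eq_zero_iff (Measure.measurable_rnDeriv P Q)]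
      rw [Measure.setLIntegral_rnDeriv hPQ]
      exact hPAc
    have hcompl : ∫ y in Aᶜ, φ (f y) ∂Q = (Q Aᶜ).toReal * φ 0 := by
      have : ∫ y in Aᶜ, φ (f y) ∂Q = ∫ _ in Aᶜ, φ 0 ∂Q := by
        refine integral_congr_ae ?_
        filter_upwards [h0] with y hy
        simp [hf, hy]
      rw [this, setIntegral_const, smul_eq_mul, measureReal_def]
    -- Jensen on A
    have hrne : NeZero (Q.restrict A) :=
      ⟨by simp [Measure.restrict_eq_zero, hQA0]⟩
    have havg : ⨍ y, f y ∂(Q.restrict A) = 1 / (Q A).toReal := by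
      rw [average_eq, measureReal_def, Measure.restrict_apply_univ, smul_eq_mul,
        Measure.setIntegral_toReal_rnDeriv hPQ A, measureReal_def, hPA]
      simp [one_div]
    have hjensen := hφconv.map_average_le hφc isClosed_univ
      (Filter.Eventually.of_forall fun y => Set.mem_univ (f y))
      (hf_int.restrict (s := A)) (hInt.restrict (s := A)) (μ := Q.restrict A)
    rw [havg] at hjensen
    have hAint : (Q A).toReal * φ (1 / (Q A).toReal) ≤ ∫ y in A, φ (f y) ∂Q := by
      have h2 := mul_le_mul_of_nonneg_left hjensen hQAr.le
      rw [average_eq, measureReal_def, Measure.restrict_apply_univ, smul_eq_mul, ← mul_assoc,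
        mul_inv_cancel₀ hQAr.ne', one_mul] at h2
      exact h2
    calc (Q A).toReal * φ (1 / (Q A).toReal) + (Q Aᶜ).toReal * φ 0
        ≤ ∫ y in A, φ (f y) ∂Q + ∫ y in Aᶜ, φ (f y) ∂Q := by
          rw [hcompl]; exact add_le_add_left hAint _
      _ = ∫ y, φ (f y) ∂Q := integral_add_compl hA hInt
  · -- equality case
    have hcond : Q[|A] = Q.withDensity ((Q A)⁻¹ • A.indicator 1) := by
      rw [withDensity_smul _ (measurable_one.indicator hA), withDensity_indicator_one hA]
      rfl
    have hrn : (Q[|A]).rnDeriv Q =ᵐ[Q] (Q A)⁻¹ • A.indicator 1 := by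
      rw [hcond]
      exact Measure.rnDeriv_withDensity Q ((measurable_one.indicator hA).const_smul _)
    have hg : ∀ y, φ (((Q A)⁻¹ • A.indicator (1 : Y → ENNReal)) y).toReal =
        A.indicator (fun _ => φ (1 / (Q A).toReal)) y
          + Aᶜ.indicator (fun _ => φ 0) y := by
      intro y
      by_cases hy : y ∈ A
      · simp [hy, Set.indicator_of_mem, Set.indicator_of_notMem, ENNReal.toReal_inv, one_div]
      · simp [hy, Set.indicator_of_mem, Set.indicator_of_notMem]
    have hint : ∫ y, φ (((Q[|A]).rnDeriv Q y).toReal) ∂Q =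
        ∫ y, (A.indicator (fun _ => φ (1 / (Q A).toReal)) y
          + Aᶜ.indicator (fun _ => φ 0) y) ∂Q := by
      refine integral_congr_ae ?_
      filter_upwards [hrn] with y hy
      rw [hy, hg]
    rw [hint, integral_add
      ((integrable_indicator_iff hA).2 (integrableOn_const (measure_ne_top Q A)))
      ((integrable_indicator_iff hA.compl).2 (integrableOn_const (measure_ne_top Q Aᶜ))),
      integral_indicator_const _ hA, integral_indicator_const _ hA.compl,
      smul_eq_mul, smul_eq_mul, measureReal_def, measureReal_def]
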